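/- For every nonnegative integer n, D(n + 2^(m+1)) = 2n − 2^m · τ(ξ) + 1, where m = ⌊log₂(n+1)⌋ and ξ = (n+1)/2^m − 1. -/

import Mathlib

/-- f m = (#1 digits) - (#0 digits) in the binary expansion of m. -/
def f (m : ℕ) : ℤ :=
  2 * ((Nat.digits 2 m).count 1 : ℤ) - ((Nat.digits 2 m).length : ℤ)

/-- Cumulated deficient binary digit sum (OEIS A268289), D 0 = 0. -/
def D (n : ℕ) : ℤ := ∑ m ∈ Finset.Icc 1 n, f m

/-- Distance from y to the nearest integer. -/
noncomputable def s (y : ℝ) : ℝ := |y - round y|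

/-- The Takagi function. -/
noncomputable def τ (x : ℝ) : ℝ := ∑' n : ℕ, s (2 ^ n * x) / 2 ^ n

lemma pow_succ_two (k : ℕ) : 2 ^ (k+1) = 2 * 2 ^ k := by ring

lemma one_le_pow (k : ℕ) : 1 ≤ 2 ^ k := Nat.one_le_two_pow

/-! ### basic facts about s -/

lemma s_le_half (y : ℝ) : s y ≤ 1/2 := abs_sub_round y

lemma s_add_int (y : ℝ) (k : ℤ) : s (y + k) = s y := by
  unfold s
  rw [round_add_intCast]
  push_cast
  ring_nf

lemma s_int (k : ℤ) : s (k : ℝ) = 0 := by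
  unfold s
  rw [round_intCast]
  simp

lemma s_eq_min (y : ℝ) : s y = min (Int.fract y) (1 - Int.fract y) := abs_sub_round_eq_min y

lemma s_eq_self {y : ℝ} (h0 : 0 ≤ y) (h1 : y ≤ 1/2) : s y = y := by
  rw [s_eq_min, Int.fract_eq_self.2 ⟨h0, by linarith⟩]
  exact min_eq_left (by linarith)

lemma s_eq_one_sub {y : ℝ} (h0 : 1/2 ≤ y) (h1 : y ≤ 1) : s y = 1 - y := by
  rcases eq_or_lt_of_le h1 with h | h
  · rw [h]
    simpa using s_int 1
  · rw [s_eq_min, Int.fract_eq_self.2 ⟨by linarith, h⟩]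
    exact min_eq_right (by linarith)

/-! ### summability and recursion for τ -/

lemma tau_summable (x : ℝ) : Summable (fun n : ℕ => s (2 ^ n * x) / 2 ^ n) := by
  refine Summable.of_nonneg_of_le (fun n => by unfold s; positivity) (fun n => ?_)
    (summable_geometric_of_lt_one (r := (1/2 : ℝ)) (by norm_num) (by norm_num))
  have h1 : s (2 ^ n * x) ≤ 1/2 := s_le_half _
  have h2 : (0:ℝ) < 2 ^ n := by positivity
  rw [div_le_iff₀ h2]
  calc s (2 ^ n * x) ≤ 1/2 := h1
    _ ≤ (1/2:ℝ)^n * 2^n := by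
      rw [← mul_pow]
      norm_num

lemma tau_rec (x : ℝ) : τ x = s x + τ (2 * x) / 2 := by
  unfold τ
  rw [Summable.tsum_eq_zero_add (tau_summable x)]
  congr 1
  · simp
  · rw [eq_div_iff (two_ne_zero), ← tsum_mul_right]
    congr 1
    funext n
    have h2 : (2:ℝ) ^ (n+1) ≠ 0 := by positivity
    rw [pow_succ]
    have h3 : (2:ℝ) ^ (n+1) * x = 2 ^ n * (2 * x) := by ring
    field_simp [h3]

lemma tau_nat (n : ℕ) : τ (n : ℝ) = 0 := by
  unfold τ
  convert tsum_zero with k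
  have h : (2:ℝ) ^ k * n = ((2 ^ k * n : ℕ) : ℤ) := by push_cast; ring
  rw [h, s_int]
  simp

lemma tau_add_one (x : ℝ) : τ (x + 1) = τ x := by
  unfold τ
  congr 1
  funext n
  have h : (2:ℝ) ^ n * (x + 1) = 2 ^ n * x + ((2 ^ n : ℕ) : ℤ) := by push_cast; ring
  rw [h, s_add_int]

lemma tau_half_left {x : ℝ} (h0 : 0 ≤ x) (h1 : x ≤ 1) : τ (x / 2) = x / 2 + τ x / 2 := by
  have h := tau_rec (x / 2)
  rw [mul_div_cancel₀ x two_ne_zero] at h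
  rw [h, s_eq_self (by linarith) (by linarith)]

lemma tau_half_right {x : ℝ} (h0 : 0 ≤ x) (h1 : x ≤ 1) :
    τ ((1 + x) / 2) = (1 - x) / 2 + τ x / 2 := by
  have h := tau_rec ((1 + x) / 2)
  rw [mul_div_cancel₀ (1 + x) two_ne_zero] at h
  have hx1 : τ (1 + x) = τ x := by rw [add_comm]; exact tau_add_one x
  rw [h, hx1, s_eq_one_sub (by linarith) (by linarith)]
  ring

/-! ### ones -/

def ones (n : ℕ) : ℕ := (Nat.digits 2 n).count 1

lemma ones_zero : ones 0 = 0 := by simp [ones]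

lemma ones_two_mul_add_one (m : ℕ) : ones (2 * m + 1) = ones m + 1 := by
  unfold ones
  rw [Nat.digits_def' (by norm_num : 1 < 2) (by omega)]
  have h1 : (2 * m + 1) % 2 = 1 := by omega
  have h2 : (2 * m + 1) / 2 = m := by omega
  rw [h1, h2]
  simp [List.count_cons]

lemma ones_one : ones 1 = 1 := by
  rw [show (1:ℕ) = 2 * 0 + 1 from rfl, ones_two_mul_add_one, ones_zero]

lemma ones_two_mul (m : ℕ) : ones (2 * m) = ones m := by
  rcases Nat.eq_zero_or_pos m with h | h
  · simp [h]
  unfold ones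
  rw [Nat.digits_def' (by norm_num : 1 < 2) (by omega)]
  have h1 : (2 * m) % 2 = 0 := by omega
  have h2 : (2 * m) / 2 = m := by omega
  rw [h1, h2]
  simp [List.count_cons]

lemma ones_pow_add : ∀ k j, j < 2 ^ k → ones (2 ^ k + j) = ones j + 1 := by
  intro k
  induction k with
  | zero =>
    intro j hj
    interval_cases j
    simp [ones_one, ones_zero]
  | succ k ih =>
    intro j hj
    rw [pow_succ_two] at hj
    rcases Nat.even_or_odd j with ⟨q, hq⟩ | ⟨q, hq⟩
    · have h1 : 2 ^ (k+1) + j = 2 * (2 ^ k + q) := by rw [pow_succ_two]; omega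
      have h2 : j = 2 * q := by omega
      have h3 : q < 2 ^ k := by omega
      rw [h1, ones_two_mul, ih q h3, h2, ones_two_mul]
    · have h1 : 2 ^ (k+1) + j = 2 * (2 ^ k + q) + 1 := by rw [pow_succ_two]; omega
      have h2 : j = 2 * q + 1 := by omega
      have h3 : q < 2 ^ k := by omega
      rw [h1, ones_two_mul_add_one, ih q h3, h2, ones_two_mul_add_one]

/-! ### f recursions -/

lemma f_zero : f 0 = 0 := by simp [f]

lemma f_two_mul_add_one (m : ℕ) : f (2 * m + 1) = f m + 1 := by
  unfold f
  rw [Nat.digits_def' (by norm_num : 1 < 2) (by omega)]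
  have h1 : (2 * m + 1) % 2 = 1 := by omega
  have h2 : (2 * m + 1) / 2 = m := by omega
  rw [h1, h2]
  simp [List.count_cons]
  push_cast
  ring

lemma f_one : f 1 = 1 := by simpa [f_zero] using f_two_mul_add_one 0

lemma f_two_mul {m : ℕ} (hm : m ≠ 0) : f (2 * m) = f m - 1 := by
  unfold f
  rw [Nat.digits_def' (by norm_num : 1 < 2) (by omega)]
  have h1 : (2 * m) % 2 = 0 := by omega
  have h2 : (2 * m) / 2 = m := by omega
  rw [h1, h2]
  simp [List.count_cons]
  push_cast
  ring

lemma f_eq (m : ℕ) : f m = 2 * (ones m : ℤ) - ((Nat.digits 2 m).length : ℤ) := rfl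

/-! ### D recursions -/

lemma D_zero : D 0 = 0 := by simp [D]

lemma D_succ (n : ℕ) : D (n + 1) = D n + f (n + 1) := by
  unfold D
  rw [Finset.sum_Icc_succ_top (by omega)]

lemma D_one : D 1 = 1 := by
  have h := D_succ 0
  rw [D_zero, f_one] at h
  simpa using h

lemma D_two : D 2 = 1 := by
  have h := D_succ 1
  have hf2 : f 2 = 0 := by
    have h2 := f_two_mul (m := 1) (by omega)
    rw [f_one] at h2
    simpa using h2
  rw [D_one] at h
  rw [show (2:ℕ) = 1 + 1 from rfl, h, hf2]
  norm_num

lemma D_three : D 3 = 3 := by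
  have h := D_succ 2
  have hf3 : f 3 = 2 := by
    have h3 := f_two_mul_add_one 1
    rw [f_one] at h3
    simpa using h3
  rw [D_two] at h
  rw [show (3:ℕ) = 2 + 1 from rfl, h, hf3]
  norm_num

lemma D_odd (n : ℕ) : D (2 * n + 1) = 2 * D n + 1 := by
  induction n with
  | zero => simp [D_one, D_zero]
  | succ n ih =>
    have h : D (2 * (n + 1) + 1) = D (2 * n + 1) + f (2 * n + 2) + f (2 * n + 3) := by
      have e1 : 2 * (n + 1) + 1 = (2 * n + 2) + 1 := by ring
      have e2 : 2 * n + 2 = (2 * n + 1) + 1 := by ring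
      rw [e1, D_succ, e2, D_succ, ← e2]
    have h2 : f (2 * n + 2) = f (n + 1) - 1 := by
      rw [show 2 * n + 2 = 2 * (n + 1) by ring]
      exact f_two_mul (by omega)
    have h3 : f (2 * n + 3) = f (n + 1) + 1 := by
      rw [show 2 * n + 3 = 2 * (n + 1) + 1 by ring]
      exact f_two_mul_add_one (n + 1)
    rw [h, ih, h2, h3, D_succ]
    ring

lemma D_even {n : ℕ} (hn : n ≠ 0) : D (2 * n) = 2 * D n - f n := by
  have h := D_succ (2 * n)
  rw [D_odd, f_two_mul_add_one] at h
  omega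

/-! ### dyadic increments of τ -/

lemma tau_delta : ∀ (k j : ℕ), j < 2 ^ k →
    τ (((j : ℝ) + 1) / (2:ℝ) ^ k) =
      τ ((j : ℝ) / (2:ℝ) ^ k) + ((k : ℝ) - 2 * (ones j : ℝ)) / (2:ℝ) ^ k := by
  intro k
  induction k with
  | zero =>
    intro j hj
    interval_cases j
    have h0 : τ (0:ℝ) = 0 := by exact_mod_cast tau_nat 0
    have h1 : τ (1:ℝ) = 0 := by exact_mod_cast tau_nat 1
    norm_num [h0, h1, ones_zero]
  | succ k ih =>
    intro j hj
    have hpow : (0:ℝ) < (2:ℝ) ^ k := by positivity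
    rcases lt_or_ge j (2 ^ k) with h | h
    · -- lower half
      have e1 : ((j : ℝ)) / (2:ℝ) ^ (k+1) = ((j : ℝ) / (2:ℝ) ^ k) / 2 := by
        rw [pow_succ]; ring
      have e2 : ((j : ℝ) + 1) / (2:ℝ) ^ (k+1) = (((j : ℝ) + 1) / (2:ℝ) ^ k) / 2 := by
        rw [pow_succ]; ring
      have hcast : (j:ℝ) + 1 ≤ (2:ℝ) ^ k := by
        have h' : (j + 1 : ℕ) ≤ 2 ^ k := h
        exact_mod_cast h'
      have hj1 : ((j:ℝ) + 1) / (2:ℝ) ^ k ≤ 1 := by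
        rw [div_le_one hpow]; linarith
      have hj0 : (j:ℝ) / (2:ℝ) ^ k ≤ 1 := by
        rw [div_le_one hpow]; linarith [Nat.cast_nonneg (α := ℝ) j]
      rw [e1, e2, tau_half_left (by positivity) hj1, tau_half_left (by positivity) hj0,
        ih j h]
      push_cast
      field_simp
      ring
    · -- upper half
      obtain ⟨j₂, rfl⟩ : ∃ j₂, j = 2 ^ k + j₂ := ⟨j - 2 ^ k, by omega⟩
      have hj₂ : j₂ < 2 ^ k := by
        rw [pow_succ_two] at hj
        omega
      have e1 : (((2 ^ k + j₂ : ℕ) : ℝ)) / (2:ℝ) ^ (k+1) = (1 + (j₂ : ℝ) / (2:ℝ) ^ k) / 2 := by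
        push_cast
        rw [pow_succ]
        field_simp
      have e2 : (((2 ^ k + j₂ : ℕ) : ℝ) + 1) / (2:ℝ) ^ (k+1)
          = (1 + ((j₂ : ℝ) + 1) / (2:ℝ) ^ k) / 2 := by
        push_cast
        rw [pow_succ]
        field_simp
        ring
      have hcast : (j₂:ℝ) + 1 ≤ (2:ℝ) ^ k := by
        have h' : (j₂ + 1 : ℕ) ≤ 2 ^ k := hj₂
        exact_mod_cast h'
      have hj1 : ((j₂:ℝ) + 1) / (2:ℝ) ^ k ≤ 1 := by
        rw [div_le_one hpow]; linarith
      have hj0 : (j₂:ℝ) / (2:ℝ) ^ k ≤ 1 := by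
        rw [div_le_one hpow]; linarith [Nat.cast_nonneg (α := ℝ) j₂]
      rw [e1, e2, tau_half_right (by positivity) hj1, tau_half_right (by positivity) hj0,
        ih j₂ hj₂, ones_pow_add k j₂ hj₂]
      push_cast
      field_simp
      ring

/-! ### main induction -/

lemma main_lemma : ∀ k r, r ≤ 2 ^ k →
    (D (3 * 2 ^ k - 1 + r) : ℝ) =
      (2:ℝ) ^ (k+1) + 2 * r - (2:ℝ) ^ k * τ ((r : ℝ) / (2:ℝ) ^ k) - 1 := by
  intro k
  induction k with
  | zero =>
    intro r hr
    interval_cases r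
    · rw [show 3 * 2 ^ 0 - 1 + 0 = 2 by norm_num, D_two]
      rw [show ((0:ℕ):ℝ) / (2:ℝ)^0 = ((0:ℕ):ℝ) by norm_num]
      rw [tau_nat 0]
      norm_num
    · rw [show 3 * 2 ^ 0 - 1 + 1 = 3 by norm_num, D_three]
      rw [show ((1:ℕ):ℝ) / (2:ℝ)^0 = ((1:ℕ):ℝ) by norm_num]
      rw [tau_nat 1]
      norm_num
  | succ k ih =>
    intro r hr
    have hpow : (0:ℝ) < (2:ℝ) ^ k := by positivity
    have honep := one_le_pow k
    rw [pow_succ_two] at hr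
    rcases Nat.even_or_odd r with ⟨r', hrr⟩ | ⟨r', hrr⟩
    · -- r = 2 r'
      have hr' : r = 2 * r' := by omega
      have hr'2 : r' ≤ 2 ^ k := by omega
      have hidx : 3 * 2 ^ (k+1) - 1 + r = 2 * (3 * 2 ^ k - 1 + r') + 1 := by
        rw [pow_succ_two]
        omega
      rw [hidx, D_odd]
      have e3 : (r : ℝ) / (2:ℝ) ^ (k+1) = (r' : ℝ) / (2:ℝ) ^ k := by
        have hcr : (r:ℝ) = 2 * r' := by exact_mod_cast hr'
        rw [hcr, pow_succ]
        rw [mul_comm ((2:ℝ)^k) 2, mul_div_mul_left _ _ (two_ne_zero)]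
      rw [e3]
      have hIH := ih r' hr'2
      have hcr : (r : ℝ) = 2 * r' := by exact_mod_cast hr'
      push_cast [hIH]
      rw [hcr]
      ring
    · -- r = 2 r' + 1
      have hr' : r = 2 * r' + 1 := by omega
      have hr'2 : r' + 1 ≤ 2 ^ k := by omega
      have hM : 3 * 2 ^ (k+1) - 1 + r = 2 * (3 * 2 ^ k + r') := by
        rw [pow_succ_two]
        omega
      rw [hM, D_even (by omega)]
      have hDM : 3 * 2 ^ k + r' = 3 * 2 ^ k - 1 + (r' + 1) := by omega
      have hIH := ih (r' + 1) hr'2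
      -- f value at M = 3 * 2^k + r'
      have hones : ones (3 * 2 ^ k + r') = ones r' + 2 := by
        have h1 : 3 * 2 ^ k + r' = 2 ^ (k+1) + (2 ^ k + r') := by
          rw [pow_succ_two]
          omega
        have h2 : 2 ^ k + r' < 2 ^ (k+1) := by
          rw [pow_succ_two]
          omega
        rw [h1, ones_pow_add (k+1) (2 ^ k + r') h2, ones_pow_add k r' (by omega)]
      have hlen : (Nat.digits 2 (3 * 2 ^ k + r')).length = k + 2 := by
        rw [Nat.digits_len 2 _ (by norm_num) (by omega)]
        have hlog : Nat.log 2 (3 * 2 ^ k + r') = k + 1 := by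
          apply Nat.log_eq_of_pow_le_of_lt_pow
          · rw [pow_succ_two]
            omega
          · rw [show (2:ℕ) ^ (k+1+1) = 4 * 2 ^ k by ring]
            omega
        omega
      have hf : (f (3 * 2 ^ k + r') : ℝ) = 2 * (ones r' : ℝ) + 2 - k := by
        rw [f_eq, hones, hlen]
        push_cast
        ring
      -- delta lemma at level k+1, j = 2r'+1
      have hjlt : 2 * r' + 1 < 2 ^ (k+1) := by
        rw [pow_succ_two]
        omega
      have hdelta := tau_delta (k+1) (2 * r' + 1) hjlt
      rw [ones_two_mul_add_one r'] at hdelta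
      have e5 : (r : ℝ) / (2:ℝ) ^ (k+1) = ((2 * r' + 1 : ℕ) : ℝ) / (2:ℝ) ^ (k+1) := by
        rw [hr']
      rw [e5]
      push_cast at hIH hdelta hf ⊢
      have e4' : ((r' : ℝ) + 1) / (2:ℝ) ^ k = (2 * (r' : ℝ) + 1 + 1) / (2:ℝ) ^ (k+1) := by
        rw [pow_succ, div_eq_div_iff (by positivity) (by positivity)]
        ring
      rw [e4'] at hIH
      rw [hDM] at hf
      have hcr : (r : ℝ) = 2 * (r' : ℝ) + 1 := by exact_mod_cast hr'
      have hne : ((2:ℝ) ^ (k+1)) ≠ 0 := by positivity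
      have hdelta2 : (2:ℝ)^(k+1) * τ ((2 * (r':ℝ) + 1 + 1) / (2:ℝ) ^ (k+1)) =
          (2:ℝ)^(k+1) * τ ((2 * (r':ℝ) + 1) / (2:ℝ) ^ (k+1)) + ((k:ℝ) + 1 - 2 * ((ones r' : ℝ) + 1)) := by
        rw [hdelta, mul_add, mul_div_cancel₀ _ hne]
      rw [hDM, hIH, hf, hcr]
      linear_combination (-1:ℝ) * hdelta2

theorem stmt_10 (n : ℕ) :
    (D (n + 2 ^ (Nat.log 2 (n + 1) + 1)) : ℝ) =
      2 * n - 2 ^ Nat.log 2 (n + 1) * τ ((n + 1) / 2 ^ Nat.log 2 (n + 1) - 1) + 1 := by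
  set m := Nat.log 2 (n + 1) with hm
  have h1 : 2 ^ m ≤ n + 1 := Nat.pow_log_le_self 2 (by omega)
  have h2 : n + 1 < 2 ^ (m + 1) := Nat.lt_pow_succ_log_self (by norm_num) (n + 1)
  rw [pow_succ_two] at h2
  set r := n + 1 - 2 ^ m with hr
  have honep := one_le_pow m
  have hrle : r ≤ 2 ^ m := by omega
  have hidx : n + 2 ^ (m + 1) = 3 * 2 ^ m - 1 + r := by
    rw [pow_succ_two]
    omega
  have hmain := main_lemma m r hrle
  rw [hidx, hmain]
  have hpow : (0:ℝ) < (2:ℝ) ^ m := by positivity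
  have hcast : ((n : ℝ) + 1) = (2:ℝ) ^ m + r := by
    have h : n + 1 = 2 ^ m + r := by omega
    exact_mod_cast h
  have hxi : ((n : ℝ) + 1) / (2:ℝ) ^ m - 1 = (r : ℝ) / (2:ℝ) ^ m := by
    rw [hcast]
    field_simp
    ring
  rw [hxi]
  have hn : (n : ℝ) = (2:ℝ) ^ m + r - 1 := by linarith
  rw [hn]
  ring
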